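/- A graph G is a k-veto interval graph for some k ≥ 2 if and only if G is a double veto (2-veto) interval graph. -/

import Mathlib

/-- A `k`-veto interval: a closed interval `[l, r]` together with `k` veto
marks, strictly increasing and strictly inside the interval. -/
structure KVetoInterval (k : ℕ) where
  l : ℝ
  r : ℝ
  marks : Fin k → ℝ
  hl : ∀ i, l < marks i
  hr : ∀ i, marks i < r
  hmono : StrictMono marks

/-- Two `k`-veto intervals are adjacent iff they intersect and neither
contains any veto mark of the other: `a_{v_k} < b_l < a_r < b_{v_1}` or
symmetrically. -/
def KVIAdj {k : ℕ} (a b : KVetoInterval k) : Prop :=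
  ((∀ i, a.marks i < b.l) ∧ b.l < a.r ∧ (∀ i, a.r < b.marks i)) ∨
  ((∀ i, b.marks i < a.l) ∧ a.l < b.r ∧ (∀ i, b.r < a.marks i))

/-- `G` is a `k`-veto interval graph. -/
def IsKVetoGraph (k : ℕ) {V : Type*} (G : SimpleGraph V) : Prop :=
  ∃ f : V → KVetoInterval k, ∀ a b : V, G.Adj a b ↔ KVIAdj (f a) (f b)

section Aux

variable {k : ℕ}

lemma marks_le_last (a : KVetoInterval k) (hk : 2 ≤ k) (i : Fin k) :
    a.marks i ≤ a.marks ⟨k - 1, by omega⟩ :=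
  a.hmono.monotone (by simp [Fin.le_def]; omega)

lemma first_le_marks (a : KVetoInterval k) (hk : 2 ≤ k) (i : Fin k) :
    a.marks ⟨0, by omega⟩ ≤ a.marks i :=
  a.hmono.monotone (by simp [Fin.le_def])

lemma forall_marks_lt (a : KVetoInterval k) (hk : 2 ≤ k) (x : ℝ) :
    (∀ i, a.marks i < x) ↔ a.marks ⟨k - 1, by omega⟩ < x :=
  ⟨fun h => h _, fun h i => lt_of_le_of_lt (marks_le_last a hk i) h⟩

lemma forall_lt_marks (a : KVetoInterval k) (hk : 2 ≤ k) (x : ℝ) :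
    (∀ i, x < a.marks i) ↔ x < a.marks ⟨0, by omega⟩ :=
  ⟨fun h => h _, fun h i => lt_of_lt_of_le h (first_le_marks a hk i)⟩

/-- Convert a `k`-veto interval to a `2`-veto interval keeping only the
extreme marks. -/
noncomputable def toTwo (hk : 2 ≤ k) (a : KVetoInterval k) : KVetoInterval 2 where
  l := a.l
  r := a.r
  marks := ![a.marks ⟨0, by omega⟩, a.marks ⟨k - 1, by omega⟩]
  hl := by
    intro i
    fin_cases i <;> simpa using a.hl _
  hr := by
    intro i
    fin_cases i <;> simpa using a.hr _
  hmono := by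
    intro i j hij
    fin_cases i <;> fin_cases j <;> simp_all [Fin.lt_def]
    exact a.hmono (by simp [Fin.lt_def]; omega)

/-- Convert a `2`-veto interval to a `k`-veto interval by linear
interpolation of the marks. -/
noncomputable def toK (hk : 2 ≤ k) (b : KVetoInterval 2) : KVetoInterval k where
  l := b.l
  r := b.r
  marks := fun i => b.marks 0 + (b.marks 1 - b.marks 0) * ((i : ℝ) / (k - 1))
  hl := by
    intro i
    have h01 : b.marks 0 < b.marks 1 := b.hmono (by norm_num)
    have hd : (0:ℝ) ≤ (i : ℝ) / (k - 1) := by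
      apply div_nonneg (Nat.cast_nonneg _)
      have : (2:ℝ) ≤ (k:ℝ) := by exact_mod_cast hk
      linarith
    nlinarith [b.hl 0]
  hr := by
    intro i
    have h01 : b.marks 0 < b.marks 1 := b.hmono (by norm_num)
    have hk1 : (0:ℝ) < (k:ℝ) - 1 := by
      have : (2:ℝ) ≤ (k:ℝ) := by exact_mod_cast hk
      linarith
    have hd : (i : ℝ) / (k - 1) ≤ 1 := by
      rw [div_le_one hk1]
      have : (i : ℕ) ≤ k - 1 := by omega
      have := (Nat.cast_le (α := ℝ)).mpr this
      push_cast [Nat.cast_sub (by omega : 1 ≤ k)] at this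
      linarith
    nlinarith [b.hr 1]
  hmono := by
    intro i j hij
    have h01 : b.marks 0 < b.marks 1 := b.hmono (by norm_num)
    have hk1 : (0:ℝ) < (k:ℝ) - 1 := by
      have : (2:ℝ) ≤ (k:ℝ) := by exact_mod_cast hk
      linarith
    have hcast : (i : ℝ) < (j : ℝ) := by exact_mod_cast hij
    have : (i : ℝ) / (k - 1) < (j : ℝ) / (k - 1) := by gcongr
    nlinarith

lemma toK_marks_zero (hk : 2 ≤ k) (b : KVetoInterval 2) :
    (toK hk b).marks ⟨0, by omega⟩ = b.marks 0 := by
  simp [toK]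

lemma toK_marks_last (hk : 2 ≤ k) (b : KVetoInterval 2) :
    (toK hk b).marks ⟨k - 1, by omega⟩ = b.marks 1 := by
  have hk1 : ((k:ℝ) - 1) ≠ 0 := by
    have : (2:ℝ) ≤ (k:ℝ) := by exact_mod_cast hk
    linarith
  simp only [toK]
  rw [show (((⟨k - 1, by omega⟩ : Fin k) : ℕ) : ℝ) = (k:ℝ) - 1 by
    push_cast [Nat.cast_sub (by omega : 1 ≤ k)]; ring]
  field_simp
  ring

lemma adj_toTwo (hk : 2 ≤ k) (a b : KVetoInterval k) :
    KVIAdj a b ↔ KVIAdj (toTwo hk a) (toTwo hk b) := by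
  unfold KVIAdj
  rw [forall_marks_lt a hk, forall_marks_lt b hk, forall_lt_marks a hk,
    forall_lt_marks b hk]
  have h2 : (2:ℕ) ≤ 2 := le_refl 2
  rw [forall_marks_lt (toTwo hk a) h2, forall_marks_lt (toTwo hk b) h2,
    forall_lt_marks (toTwo hk a) h2, forall_lt_marks (toTwo hk b) h2]
  simp [toTwo]

lemma adj_toK (hk : 2 ≤ k) (a b : KVetoInterval 2) :
    KVIAdj a b ↔ KVIAdj (toK hk a) (toK hk b) := by
  unfold KVIAdj
  have h2 : (2:ℕ) ≤ 2 := le_refl 2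
  rw [forall_marks_lt a h2, forall_marks_lt b h2, forall_lt_marks a h2,
    forall_lt_marks b h2, forall_marks_lt (toK hk a) hk,
    forall_marks_lt (toK hk b) hk, forall_lt_marks (toK hk a) hk,
    forall_lt_marks (toK hk b) hk, toK_marks_zero, toK_marks_zero,
    toK_marks_last, toK_marks_last]
  have ha0 : a.marks ⟨0, by omega⟩ = a.marks 0 := rfl
  have ha1 : a.marks ⟨2 - 1, by omega⟩ = a.marks 1 := rfl
  have hb0 : b.marks ⟨0, by omega⟩ = b.marks 0 := rfl
  have hb1 : b.marks ⟨2 - 1, by omega⟩ = b.marks 1 := rfl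
  rw [ha0, ha1, hb0, hb1]
  simp [toK]

end Aux

/-- For `k ≥ 2`, a graph is a `k`-veto interval graph iff it is a double
(2-veto) interval graph. -/
theorem stmt_13 {V : Type*} (G : SimpleGraph V) (k : ℕ) (hk : 2 ≤ k) :
    IsKVetoGraph k G ↔ IsKVetoGraph 2 G := by
  constructor
  · rintro ⟨f, hf⟩
    exact ⟨fun v => toTwo hk (f v), fun a b => (hf a b).trans (adj_toTwo hk _ _)⟩
  · rintro ⟨f, hf⟩
    exact ⟨fun v => toK hk (f v), fun a b => (hf a b).trans (adj_toK hk _ _)⟩
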